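/- The matrix FV⁻¹ (with F and V as in the SIHUR next-generation construction) has rank at most 1, and its eigenvalues are R₀ (with the above formula) and 0 with multiplicity 2. -/
import Mathlib


open Polynomial

theorem next_generation_rank_and_eigenvalues (β q m γ₁ γ₂ τ k₁ k₂ k₃ : ℝ)
    (hβ : 0 ≤ β) (hq : 0 ≤ q) (hm : 0 ≤ m)
    (hγ₁ : 0 ≤ γ₁) (hγ₂ : 0 ≤ γ₂) (hτ : 0 ≤ τ)
    (hk₁ : 0 < k₁) (hk₂ : 0 < k₂) (hk₃ : 0 < k₃)
    (F V : Matrix (Fin 3) (Fin 3) ℝ)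
    (hF : F = β • !![(1:ℝ), q, m; 0, 0, 0; 0, 0, 0])
    (hV : V = !![k₁, 0, 0; -γ₁, k₂, 0; -γ₂, -τ, k₃])
    (R₀ : ℝ)
    (hR₀ : R₀ = (β / k₁) * (1 + q * γ₁ / k₂ + m * (γ₁ * τ + γ₂ * k₂) / (k₂ * k₃))) :
    (F * V⁻¹).rank ≤ 1 ∧
      (F * V⁻¹).charpoly = X ^ 2 * (X - C R₀) := by
  have hdet : V.det = k₁ * k₂ * k₃ := by
    subst hV; rw [Matrix.det_fin_three]; simp [Matrix.vecHead, Matrix.vecTail]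
  have hdet' : IsUnit V.det := by
    rw [hdet]; exact (by positivity : (0:ℝ) < k₁ * k₂ * k₃).ne'.isUnit
  haveI : Invertible V := V.invertibleOfIsUnitDet hdet'
  set b : ℝ := β * (q / k₂ + m * τ / (k₂ * k₃)) with hb
  set c : ℝ := β * m / k₃ with hc
  have hM : F * V⁻¹ = !![R₀, b, c; 0, 0, 0; 0, 0, 0] := by
    rw [Matrix.mul_inv_eq_iff_eq_mul_of_invertible]
    subst hF hV hR₀
    ext i j
    fin_cases i <;> fin_cases j <;>
      simp [Matrix.mul_apply, Fin.sum_univ_three, hb, hc, Matrix.vecHead, Matrix.vecTail] <;>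
      field_simp <;> ring
  rw [hM]
  constructor
  · have hfac : (!![R₀, b, c; 0, 0, 0; 0, 0, 0] : Matrix (Fin 3) (Fin 3) ℝ)
        = (!![(1:ℝ); 0; 0] : Matrix (Fin 3) (Fin 1) ℝ) * !![R₀, b, c] := by
      ext i j
      fin_cases i <;> fin_cases j <;> simp [Matrix.mul_apply, Matrix.vecHead, Matrix.vecTail]
    rw [hfac]
    calc ((!![(1:ℝ); 0; 0] : Matrix (Fin 3) (Fin 1) ℝ) * !![R₀, b, c]).rank
        ≤ (!![(1:ℝ); 0; 0] : Matrix (Fin 3) (Fin 1) ℝ).rank := Matrix.rank_mul_le_left _ _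
      _ ≤ Fintype.card (Fin 1) := Matrix.rank_le_card_width _
      _ = 1 := by simp
  · rw [Matrix.charpoly, Matrix.det_fin_three]
    simp [Matrix.charmatrix_apply_eq, Matrix.charmatrix_apply_ne, Matrix.vecHead, Matrix.vecTail]
    ring
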